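/- Let H be a finite graph in which every connected component contains at most one cycle. Then the edges of H can be colored with 3 colors so that the coloring is conflict-free (for every edge e there is a color appearing on exactly one edge of the closed edge-neighborhood of e), and moreover for every vertex v of positive degree there is a color c_v such that v is incident to exactly one edge of color c_v. -/

import Mathlib

namespace CF

open SimpleGraph
open scoped Classical

variable {V : Type*}

structure Inv (H : SimpleGraph V) (s : V → Option V) (C : Set V) (ℓ : V → Fin 3) : Prop where
  e1 : ∀ a b, H.Adj a b ↔ (s a = some b ∨ s b = some a)
  e2 : ∀ a b, s a = some b → s b ≠ some a
  ha : ∀ a b, s a = some b → ℓ a ≠ ℓ b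
  h4 : ∀ y a b, s y = none → s a = some y → s b = some y → a = b
  hb : ∀ z v u, s z = some v → s v = some u → v ∉ C → ℓ z ≠ ℓ u
  hk : ∀ z w v, s z = some v → s w = some v → w ∈ C → z ∉ C → ℓ z ≠ ℓ w
  kinj : ∀ z w v, s z = some v → s w = some v → z ∈ C → w ∈ C → z = w
  c1 : ∀ v ∈ C, ∃ u ∈ C, s v = some u

variable {H : SimpleGraph V} {s : V → Option V} {C : Set V} {ℓ : V → Fin 3}

lemma exists_owner (inv : Inv H s C ℓ) (e : Sym2 V) (he : e ∈ H.edgeSet) :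
    ∃ a b, s a = some b ∧ e = s(a, b) := by
  induction e with
  | _ x y =>
    have hadj : H.Adj x y := he
    rcases (inv.e1 x y).1 hadj with h | h
    · exact ⟨x, y, h, rfl⟩
    · exact ⟨y, x, h, Sym2.eq_swap⟩

lemma owner_unique (inv : Inv H s C ℓ) {a b a' b' : V} (h : s a = some b) (h' : s a' = some b')
    (he : s(a, b) = s(a', b')) : a = a' ∧ b = b' := by
  rcases Sym2.eq_iff.1 he with ⟨rfl, rfl⟩ | ⟨rfl, rfl⟩
  · exact ⟨rfl, rfl⟩
  · exact absurd h' (inv.e2 _ _ h)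

noncomputable def fcol (s : V → Option V) (ℓ : V → Fin 3) (H : SimpleGraph V) :
    H.edgeSet → Fin 3 := fun e =>
  if h : ∃ a b, s a = some b ∧ (e : Sym2 V) = s(a, b) then ℓ h.choose else 0

lemma fcol_eq (inv : Inv H s C ℓ) {a b : V} (hab : s a = some b) (he : s(a, b) ∈ H.edgeSet) :
    fcol s ℓ H ⟨s(a, b), he⟩ = ℓ a := by
  have h : ∃ a' b', s a' = some b' ∧ ((⟨s(a,b), he⟩ : H.edgeSet) : Sym2 V) = s(a', b') :=
    ⟨a, b, hab, rfl⟩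
  simp only [fcol]
  rw [dif_pos h]
  obtain ⟨b'', hb'', heq⟩ := h.choose_spec
  exact congrArg ℓ (owner_unique inv hb'' hab heq.symm).1

lemma fcol_eq' (inv : Inv H s C ℓ) {a b : V} (hab : s a = some b) (e : H.edgeSet)
    (he : (e : Sym2 V) = s(a, b)) : fcol s ℓ H e = ℓ a := by
  have : e = ⟨s(a,b), he ▸ e.2⟩ := Subtype.ext he
  rw [this]; exact fcol_eq inv hab _

lemma edge_decomp (inv : Inv H s C ℓ) (e : H.edgeSet) {v : V} (hv : v ∈ (e : Sym2 V)) :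
    ∃ z w, s z = some w ∧ (e : Sym2 V) = s(z, w) ∧ (v = z ∨ v = w) := by
  obtain ⟨z, w, hz, hezw⟩ := exists_owner inv e e.2
  refine ⟨z, w, hz, hezw, ?_⟩
  rw [hezw] at hv; exact Sym2.mem_iff.1 hv

lemma edge_mem (inv : Inv H s C ℓ) {a b : V} (hab : s a = some b) : s(a, b) ∈ H.edgeSet :=
  (inv.e1 a b).2 (Or.inl hab)

lemma abstract (inv : Inv H s C ℓ) :
    (∀ e : H.edgeSet, ∃ c : Fin 3, ∃! e' : H.edgeSet,
        (∃ v : V, v ∈ (e : Sym2 V) ∧ v ∈ (e' : Sym2 V)) ∧ fcol s ℓ H e' = c) ∧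
      (∀ v : V, (∃ u : V, H.Adj v u) →
        ∃ c : Fin 3, ∃! e : H.edgeSet, v ∈ (e : Sym2 V) ∧ fcol s ℓ H e = c) := by
  constructor
  · intro e
    obtain ⟨a, b, hab, heab⟩ := exists_owner inv e e.2
    have hea : a ∈ (e : Sym2 V) := by rw [heab]; exact Sym2.mem_mk_left a b
    have heb : b ∈ (e : Sym2 V) := by rw [heab]; exact Sym2.mem_mk_right a b
    have fe : fcol s ℓ H e = ℓ a := fcol_eq' inv hab e heab
    by_cases haC : a ∈ C
    · -- candidate: e itself, color ℓ a
      refine ⟨ℓ a, e, ⟨⟨a, hea, hea⟩, fe⟩, ?_⟩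
      rintro e'' ⟨⟨v, hv, hv''⟩, hcol⟩
      obtain ⟨z, w, hzw, hezw, hvzw⟩ := edge_decomp inv e'' hv''
      have hlz : ℓ z = ℓ a := by rw [← fcol_eq' inv hzw e'' hezw, hcol]
      have hva : v = a ∨ v = b := by rw [heab] at hv; exact Sym2.mem_iff.1 hv
      have hza : z = a := by
        rcases hva with h2 | h2 <;> rcases hvzw with h1 | h1
        · rw [← h1, h2]
        · -- w = a, i.e. s z = some a
          rw [h2] at h1; rw [← h1] at hzw
          exact absurd hlz (inv.ha z a hzw)
        · -- z = b
          rw [h2] at h1; rw [h1] at hab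
          exact absurd hlz.symm (inv.ha a z hab)
        · -- w = b, i.e. s z = some b
          rw [h2] at h1; rw [← h1] at hzw
          by_cases hzC : z ∈ C
          · exact inv.kinj z a b hzw hab hzC haC
          · exact absurd hlz (inv.hk z a b hzw hab haC hzC)
      rw [hza] at hzw
      rw [hab] at hzw
      have hwb : w = b := (Option.some_inj.1 hzw).symm
      exact Subtype.ext (by rw [hezw, hza, hwb, heab])
    · by_cases hsb : ∃ t, s b = some t
      · obtain ⟨t, hbt⟩ := hsb
        have hebt : s(b,t) ∈ H.edgeSet := edge_mem inv hbt
        refine ⟨ℓ b, ⟨s(b,t), hebt⟩, ⟨⟨b, heb, Sym2.mem_mk_left b t⟩, fcol_eq inv hbt hebt⟩, ?_⟩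
        rintro e'' ⟨⟨v, hv, hv''⟩, hcol⟩
        obtain ⟨z, w, hzw, hezw, hvzw⟩ := edge_decomp inv e'' hv''
        have hlz : ℓ z = ℓ b := by rw [← fcol_eq' inv hzw e'' hezw, hcol]
        have hva : v = a ∨ v = b := by rw [heab] at hv; exact Sym2.mem_iff.1 hv
        have hzb : z = b := by
          rcases hva with h2 | h2 <;> rcases hvzw with h1 | h1
          · rw [h2] at h1; rw [h1] at hab
            exact absurd hlz (inv.ha z b hab)
          · rw [h2] at h1; rw [← h1] at hzw
            exact absurd hlz (inv.hb z a b hzw hab haC)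
          · rw [← h1, h2]
          · rw [h2] at h1; rw [← h1] at hzw
            exact absurd hlz (inv.ha z b hzw)
        rw [hzb, hbt] at hzw
        have hwt : w = t := Option.some_inj.1 hzw.symm
        exact Subtype.ext (by rw [hezw, hzb, hwt])
      · have hbn : s b = none := by
          cases h : s b with
          | none => rfl
          | some t => exact absurd ⟨t, h⟩ hsb
        refine ⟨ℓ a, e, ⟨⟨a, hea, hea⟩, fe⟩, ?_⟩
        rintro e'' ⟨⟨v, hv, hv''⟩, hcol⟩
        obtain ⟨z, w, hzw, hezw, hvzw⟩ := edge_decomp inv e'' hv''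
        have hlz : ℓ z = ℓ a := by rw [← fcol_eq' inv hzw e'' hezw, hcol]
        have hva : v = a ∨ v = b := by rw [heab] at hv; exact Sym2.mem_iff.1 hv
        have hza : z = a := by
          rcases hva with h2 | h2 <;> rcases hvzw with h1 | h1
          · rw [← h1, h2]
          · rw [h2] at h1; rw [← h1] at hzw
            exact absurd hlz (inv.ha z a hzw)
          · rw [h2] at h1; rw [h1] at hbn
            rw [hbn] at hzw; exact absurd hzw (by simp)
          · rw [h2] at h1; rw [← h1] at hzw
            exact inv.h4 b z a hbn hzw hab
        rw [hza, hab] at hzw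
        have hwb : w = b := (Option.some_inj.1 hzw).symm
        exact Subtype.ext (by rw [hezw, hza, hwb, heab])
  · rintro v ⟨u, hadj⟩
    cases hsv : s v with
    | some m =>
      have hem : s(v,m) ∈ H.edgeSet := edge_mem inv hsv
      refine ⟨ℓ v, ⟨s(v,m), hem⟩, ⟨Sym2.mem_mk_left v m, fcol_eq inv hsv hem⟩, ?_⟩
      rintro e'' ⟨hv'', hcol⟩
      obtain ⟨z, w, hzw, hezw, hvzw⟩ := edge_decomp inv e'' hv''
      have hlz : ℓ z = ℓ v := by rw [← fcol_eq' inv hzw e'' hezw, hcol]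
      have hzv : z = v := by
        rcases hvzw with h1 | h1
        · exact h1.symm
        · rw [← h1] at hzw; exact absurd hlz (inv.ha z v hzw)
      rw [hzv, hsv] at hzw
      have hwm : w = m := Option.some_inj.1 hzw.symm
      exact Subtype.ext (by rw [hezw, hzv, hwm])
    | none =>
      have huv : s u = some v := by
        rcases (inv.e1 v u).1 hadj with h | h
        · rw [hsv] at h; exact absurd h (by simp)
        · exact h
      have heu : s(u,v) ∈ H.edgeSet := edge_mem inv huv
      refine ⟨ℓ u, ⟨s(u,v), heu⟩, ⟨Sym2.mem_mk_right u v, fcol_eq inv huv heu⟩, ?_⟩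
      rintro e'' ⟨hv'', hcol⟩
      obtain ⟨z, w, hzw, hezw, hvzw⟩ := edge_decomp inv e'' hv''
      have hzu : z = u := by
        rcases hvzw with h1 | h1
        · rw [h1] at hsv; rw [hsv] at hzw; exact absurd hzw (by simp)
        · rw [← h1] at hzw; exact inv.h4 v z u hsv hzw huv
      rw [hzu, huv] at hzw
      have hwv : w = v := Option.some_inj.1 hzw.symm
      exact Subtype.ext (by rw [hezw, hzu, hwv])

end CF

namespace CF
open SimpleGraph
open scoped Classical

def pick2 (a b : Fin 3) : Fin 3 :=
  if a ≠ 0 ∧ b ≠ 0 then 0 else if a ≠ 1 ∧ b ≠ 1 then 1 else 2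

lemma pick2_ne : ∀ a b : Fin 3, pick2 a b ≠ a ∧ pick2 a b ≠ b := by decide

variable {V : Type*}

lemma extend_leaf (H : SimpleGraph V) (x y : V) (hxy : H.Adj x y)
    (hleaf : ∀ z, H.Adj x z → z = y)
    {s' : V → Option V} {C : Set V} {ℓ' : V → Fin 3}
    (inv : Inv (H.deleteEdges {s(x,y)}) s' C ℓ') : ∃ s ℓ, Inv H s C ℓ := by
  set H' := H.deleteEdges {s(x,y)} with hH'
  have hxney : x ≠ y := hxy.ne
  have hAdj' : ∀ a b, H'.Adj a b ↔ H.Adj a b ∧ ¬((a = x ∧ b = y) ∨ (a = y ∧ b = x)) := by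
    intro a b
    rw [hH', SimpleGraph.deleteEdges_adj]
    constructor
    · rintro ⟨h1, h2⟩
      refine ⟨h1, fun hc => h2 ?_⟩
      simp only [Set.mem_singleton_iff, Sym2.eq_iff]
      exact hc
    · rintro ⟨h1, h2⟩
      refine ⟨h1, fun hc => h2 ?_⟩
      simpa only [Set.mem_singleton_iff, Sym2.eq_iff] using hc
  have hxiso : ∀ z, ¬ H'.Adj x z := by
    intro z h
    have h2 := (hAdj' x z).1 h
    have hz := hleaf z h2.1
    exact h2.2 (Or.inl ⟨rfl, hz⟩)
  have hsx : s' x = none := by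
    cases h : s' x with
    | none => rfl
    | some b => exact absurd ((inv.e1 x b).2 (Or.inl h)) (hxiso b)
  have hinx : ∀ z, s' z ≠ some x := by
    intro z h
    exact hxiso z ((inv.e1 z x).2 (Or.inl h)).symm
  have hAdjH : ∀ a b, H.Adj a b ↔ H'.Adj a b ∨ (a = x ∧ b = y) ∨ (a = y ∧ b = x) := by
    intro a b
    constructor
    · intro h
      by_cases hc : (a = x ∧ b = y) ∨ (a = y ∧ b = x)
      · exact Or.inr hc
      · exact Or.inl ((hAdj' a b).2 ⟨h, hc⟩)
    · rintro (h | ⟨rfl, rfl⟩ | ⟨rfl, rfl⟩)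
      · exact ((hAdj' a b).1 h).1
      · exact hxy
      · exact hxy.symm
  have hxC : x ∉ C := by
    intro hc
    obtain ⟨u, _, hu⟩ := inv.c1 x hc
    rw [hsx] at hu; exact absurd hu (by simp)
  cases hsy : s' y with
  | some u0 =>
    -- case A : y already owns an edge; orient new edge x → y
    have hyx : y ≠ x := hxney.symm
    set extra : Fin 3 :=
      (if y ∈ C then (if h : ∃ w, w ∈ C ∧ s' w = some y then ℓ' h.choose else ℓ' y)
        else ℓ' u0) with hextra
    set newc := pick2 (ℓ' y) extra with hnewc
    set s := Function.update s' x (some y) with hs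
    set ℓ := Function.update ℓ' x newc with hℓ
    have hsxy : s x = some y := by rw [hs]; simp
    have hsne : ∀ z, z ≠ x → s z = s' z := by
      intro z h; rw [hs]; exact Function.update_of_ne h _ _
    have hlne : ∀ z, z ≠ x → ℓ z = ℓ' z := by
      intro z h; rw [hℓ]; exact Function.update_of_ne h _ _
    have hlx : ℓ x = newc := by rw [hℓ]; simp
    have hnsx : ∀ z, s z ≠ some x := by
      intro z hz
      rcases eq_or_ne z x with rfl | hzx
      · rw [hsxy] at hz; exact hyx (Option.some_inj.1 hz)
      · rw [hsne z hzx] at hz; exact hinx z hz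
    have n1 : newc ≠ ℓ' y := (pick2_ne _ _).1
    have n3 : y ∉ C → newc ≠ ℓ' u0 := by
      intro h
      have hh : extra = ℓ' u0 := by rw [hextra, if_neg h]
      rw [hnewc, ← hh]; exact (pick2_ne _ _).2
    have n4 : ∀ w, w ∈ C → s' w = some y → newc ≠ ℓ' w := by
      intro w hwC hwy
      have hyC : y ∈ C := by
        obtain ⟨u, huC, hu⟩ := inv.c1 w hwC
        rw [hwy] at hu
        rwa [← Option.some_inj.1 hu] at huC
      have hex : ∃ w', w' ∈ C ∧ s' w' = some y := ⟨w, hwC, hwy⟩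
      have hcw : hex.choose = w :=
        inv.kinj _ _ _ hex.choose_spec.2 hwy hex.choose_spec.1 hwC
      have hh : extra = ℓ' w := by rw [hextra, if_pos hyC, dif_pos hex, hcw]
      rw [hnewc, ← hh]; exact (pick2_ne _ _).2
    refine ⟨s, ℓ, ?_, ?_, ?_, ?_, ?_, ?_, ?_, ?_⟩
    · -- e1
      intro a b
      rw [hAdjH]
      rcases eq_or_ne a x with rfl | hax
      · constructor
        · rintro (h | ⟨-, h2⟩ | ⟨h1, -⟩)
          · exact absurd h (hxiso b)
          · rw [h2]; exact Or.inl hsxy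
          · exact absurd h1 hxney
        · rintro (h | h)
          · rw [hsxy] at h
            exact Or.inr (Or.inl ⟨rfl, (Option.some_inj.1 h).symm⟩)
          · exact absurd h (hnsx b)
      · rcases eq_or_ne b x with rfl | hbx
        · constructor
          · rintro (h | ⟨h1, -⟩ | ⟨h1, -⟩)
            · exact absurd h.symm (hxiso a)
            · exact absurd h1 hax
            · rw [h1]; exact Or.inr hsxy
          · rintro (h | h)
            · exact absurd h (hnsx a)
            · rw [hsxy] at h
              exact Or.inr (Or.inr ⟨(Option.some_inj.1 h).symm, rfl⟩)
        · rw [hsne a hax, hsne b hbx]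
          constructor
          · rintro (h | ⟨h1, -⟩ | ⟨-, h2⟩)
            · exact (inv.e1 a b).1 h
            · exact absurd h1 hax
            · exact absurd h2 hbx
          · intro h; exact Or.inl ((inv.e1 a b).2 h)
    · -- e2
      intro a b hab hba
      rcases eq_or_ne a x with rfl | hax
      · rw [hsxy] at hab
        have hby : b = y := (Option.some_inj.1 hab).symm
        rw [hby, hsne y hyx] at hba
        exact hinx y hba
      · rcases eq_or_ne b x with rfl | hbx
        · exact hnsx a hab
        · rw [hsne a hax] at hab
          rw [hsne b hbx] at hba
          exact inv.e2 a b hab hba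
    · -- ha
      intro a b hab
      rcases eq_or_ne a x with rfl | hax
      · rw [hsxy] at hab
        have hby : b = y := (Option.some_inj.1 hab).symm
        rw [hby, hlx, hlne y hyx]
        exact n1
      · have hbnex : b ≠ x := by
          intro h; subst h; exact hnsx a hab
        rw [hsne a hax] at hab
        rw [hlne a hax, hlne b hbnex]
        exact inv.ha a b hab
    · -- h4
      intro y0 a b hy0 hay hby
      have hy0x : y0 ≠ x := by
        intro h; subst h; rw [hsxy] at hy0; exact absurd hy0 (by simp)
      have haux : ∀ c, s c = some y0 → c ≠ x := by
        intro c hc hcx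
        rw [hcx, hsxy] at hc
        have hyy0 : y = y0 := Option.some_inj.1 hc
        rw [← hyy0, hsne y hyx, hsy] at hy0
        exact absurd hy0 (by simp)
      have hax := haux a hay
      have hbx := haux b hby
      rw [hsne a hax] at hay
      rw [hsne b hbx] at hby
      rw [hsne y0 hy0x] at hy0
      exact inv.h4 y0 a b hy0 hay hby
    · -- hb
      intro z v u hzv hvu hvC
      have hvx : v ≠ x := fun h => hnsx z (h ▸ hzv)
      have hux : u ≠ x := fun h => hnsx v (h ▸ hvu)
      rw [hsne v hvx] at hvu
      rcases eq_or_ne z x with rfl | hzx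
      · rw [hsxy] at hzv
        have hvy : v = y := (Option.some_inj.1 hzv).symm
        rw [hvy, hsy] at hvu
        have huu0 : u = u0 := (Option.some_inj.1 hvu).symm
        rw [hlx, hlne u hux, huu0]
        rw [hvy] at hvC
        exact n3 hvC
      · rw [hsne z hzx] at hzv
        rw [hlne z hzx, hlne u hux]
        exact inv.hb z v u hzv hvu hvC
    · -- hk
      intro z w v hzv hwv hwC hzC
      have hwx : w ≠ x := fun h => hxC (h ▸ hwC)
      have hvx : v ≠ x := fun h => hnsx z (h ▸ hzv)
      rw [hsne w hwx] at hwv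
      rcases eq_or_ne z x with rfl | hzx
      · rw [hsxy] at hzv
        have hvy : v = y := (Option.some_inj.1 hzv).symm
        rw [hvy] at hwv
        rw [hlx, hlne w hwx]
        exact n4 w hwC hwv
      · rw [hsne z hzx] at hzv
        rw [hlne z hzx, hlne w hwx]
        exact inv.hk z w v hzv hwv hwC hzC
    · -- kinj
      intro z w v hzv hwv hzC hwC
      have hzx : z ≠ x := fun h => hxC (h ▸ hzC)
      have hwx : w ≠ x := fun h => hxC (h ▸ hwC)
      rw [hsne z hzx] at hzv
      rw [hsne w hwx] at hwv
      exact inv.kinj z w v hzv hwv hzC hwC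
    · -- c1
      intro v hvC
      have hvx : v ≠ x := fun h => hxC (h ▸ hvC)
      obtain ⟨u, huC, hu⟩ := inv.c1 v hvC
      exact ⟨u, huC, by rw [hsne v hvx]; exact hu⟩
  | none =>
    -- case B/C : y owns nothing; orient new edge y → x
    have hyx : y ≠ x := hxney.symm
    have hyC : y ∉ C := by
      intro hc
      obtain ⟨u, _, hu⟩ := inv.c1 y hc
      rw [hsy] at hu; exact absurd hu (by simp)
    set newc := pick2 (ℓ' y)
      (if h : ∃ w, s' w = some y then ℓ' h.choose else ℓ' y) with hnewc
    set s := Function.update s' y (some x) with hs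
    set ℓ := Function.update ℓ' x newc with hℓ
    have hsyx : s y = some x := by rw [hs]; simp
    have hsne : ∀ z, z ≠ y → s z = s' z := by
      intro z h; rw [hs]; exact Function.update_of_ne h _ _
    have hlne : ∀ z, z ≠ x → ℓ z = ℓ' z := by
      intro z h; rw [hℓ]; exact Function.update_of_ne h _ _
    have hlx : ℓ x = newc := by rw [hℓ]; simp
    have hsxn : s x = none := by rw [hsne x hxney]; exact hsx
    have n1 : newc ≠ ℓ' y := (pick2_ne _ _).1
    have n2 : ∀ w, s' w = some y → newc ≠ ℓ' w := by
      intro w hwy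
      have hex : ∃ w', s' w' = some y := ⟨w, hwy⟩
      have hcw : hex.choose = w := inv.h4 y _ _ hsy hex.choose_spec hwy
      have hh : (if h : ∃ w, s' w = some y then ℓ' h.choose else ℓ' y) = ℓ' w := by
        rw [dif_pos hex, hcw]
      rw [hnewc, ← hh]; exact (pick2_ne _ _).2
    have hnsx : ∀ z, z ≠ y → s z ≠ some x := by
      intro z hzy hz
      rw [hsne z hzy] at hz; exact hinx z hz
    refine ⟨s, ℓ, ?_, ?_, ?_, ?_, ?_, ?_, ?_, ?_⟩
    · -- e1
      intro a b
      rw [hAdjH]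
      rcases eq_or_ne a y with rfl | hay
      · constructor
        · rintro (h | ⟨h1, -⟩ | ⟨-, h2⟩)
          · have := (inv.e1 a b).1 h
            rcases this with h1 | h1
            · rw [hsy] at h1; exact absurd h1 (by simp)
            · right
              rcases eq_or_ne b a with heq2 | hby
              · rw [heq2, hsy] at h1; exact absurd h1 (by simp)
              · rw [hsne b hby]; exact h1
          · exact absurd h1.symm hxney
          · rw [h2]; exact Or.inl hsyx
        · rintro (h | h)
          · rw [hsyx] at h
            exact Or.inr (Or.inr ⟨rfl, (Option.some_inj.1 h).symm⟩)
          · rcases eq_or_ne b a with heq2 | hby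
            · rw [heq2, hsyx] at h
              exact absurd (Option.some_inj.1 h) hxney
            · rw [hsne b hby] at h
              exact Or.inl ((inv.e1 a b).2 (Or.inr h))
      · rcases eq_or_ne b y with rfl | hby
        · constructor
          · rintro (h | ⟨h1, -⟩ | ⟨-, h2⟩)
            · have := (inv.e1 a b).1 h
              rcases this with h1 | h1
              · left; rw [hsne a hay]; exact h1
              · rw [hsy] at h1; exact absurd h1 (by simp)
            · rw [h1]; exact Or.inr hsyx
            · exact absurd h2.symm hxney
          · rintro (h | h)
            · rw [hsne a hay] at h
              exact Or.inl ((inv.e1 a b).2 (Or.inl h))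
            · rw [hsyx] at h
              exact Or.inr (Or.inl ⟨(Option.some_inj.1 h).symm, rfl⟩)
        · rw [hsne a hay, hsne b hby]
          constructor
          · rintro (h | ⟨-, h2⟩ | ⟨h1, -⟩)
            · exact (inv.e1 a b).1 h
            · exact absurd h2 hby
            · exact absurd h1 hay
          · intro h; exact Or.inl ((inv.e1 a b).2 h)
    · -- e2
      intro a b hab hba
      rcases eq_or_ne a y with rfl | hay
      · rw [hsyx] at hab
        have hbx : b = x := (Option.some_inj.1 hab).symm
        rw [hbx, hsxn] at hba; exact absurd hba (by simp)
      · rw [hsne a hay] at hab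
        rcases eq_or_ne b y with heq2 | hby
        · rw [heq2, hsyx] at hba
          have hax : a = x := (Option.some_inj.1 hba).symm
          rw [hax, hsx] at hab; exact absurd hab (by simp)
        · rw [hsne b hby] at hba
          exact inv.e2 a b hab hba
    · -- ha
      intro a b hab
      rcases eq_or_ne a y with rfl | hay
      · rw [hsyx] at hab
        have hbx : b = x := (Option.some_inj.1 hab).symm
        rw [hbx, hlx, hlne a hyx]
        exact fun h => n1 h.symm
      · rw [hsne a hay] at hab
        have hbnex : b ≠ x := fun h => hinx a (h ▸ hab)
        have hanex : a ≠ x := fun h => by rw [h, hsx] at hab; exact absurd hab (by simp)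
        rw [hlne a hanex, hlne b hbnex]
        exact inv.ha a b hab
    · -- h4
      intro y0 a b hy0 hay hby
      have hy0y : y0 ≠ y := by
        intro h; subst h; rw [hsyx] at hy0; exact absurd hy0 (by simp)
      rcases eq_or_ne y0 x with heq | hy0x
      · have hcy : ∀ c, s c = some y0 → c = y := by
          intro c hc
          by_contra hcy
          rw [heq] at hc
          exact hnsx c hcy hc
        rw [hcy a hay, hcy b hby]
      · have hay' : a ≠ y := by
          intro h; subst h; rw [hsyx] at hay
          exact hy0x (Option.some_inj.1 hay).symm
        have hby' : b ≠ y := by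
          intro h; subst h; rw [hsyx] at hby
          exact hy0x (Option.some_inj.1 hby).symm
        rw [hsne a hay'] at hay
        rw [hsne b hby'] at hby
        rw [hsne y0 hy0y] at hy0
        exact inv.h4 y0 a b hy0 hay hby
    · -- hb
      intro z v u hzv hvu hvC
      rcases eq_or_ne v y with heq | hvy
      · rw [heq, hsyx] at hvu
        have hux : u = x := (Option.some_inj.1 hvu).symm
        have hzy : z ≠ y := by
          intro h; rw [h, hsyx] at hzv
          have hxv : x = v := Option.some_inj.1 hzv
          rw [heq] at hxv
          exact hxney hxv
        rw [hsne z hzy] at hzv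
        have hzx : z ≠ x := by
          intro h; rw [h, hsx] at hzv; exact absurd hzv (by simp)
        have hzv' : s' z = some y := by rw [← heq]; exact hzv
        rw [hlne z hzx, hux, hlx]
        exact fun h => n2 z hzv' h.symm
      · rw [hsne v hvy] at hvu
        have hux : u ≠ x := fun h => hinx v (h ▸ hvu)
        have hzy : z ≠ y := by
          intro h; rw [h, hsyx] at hzv
          have hvx : v = x := (Option.some_inj.1 hzv).symm
          rw [hvx, hsx] at hvu
          exact absurd hvu (by simp)
        rw [hsne z hzy] at hzv
        have hzx : z ≠ x := fun h => by rw [h, hsx] at hzv; exact absurd hzv (by simp)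
        rw [hlne z hzx, hlne u hux]
        exact inv.hb z v u hzv hvu hvC
    · -- hk
      intro z w v hzv hwv hwC hzC
      have hwy : w ≠ y := fun h => hyC (h ▸ hwC)
      rw [hsne w hwy] at hwv
      have hvx : v ≠ x := fun h => hinx w (h ▸ hwv)
      have hzy : z ≠ y := by
        intro h; rw [h, hsyx] at hzv
        exact hvx (Option.some_inj.1 hzv).symm
      rw [hsne z hzy] at hzv
      have hzx : z ≠ x := fun h => by rw [h, hsx] at hzv; exact absurd hzv (by simp)
      have hwx : w ≠ x := fun h => by rw [h, hsx] at hwv; exact absurd hwv (by simp)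
      rw [hlne z hzx, hlne w hwx]
      exact inv.hk z w v hzv hwv hwC hzC
    · -- kinj
      intro z w v hzv hwv hzC hwC
      have hzy : z ≠ y := fun h => hyC (h ▸ hzC)
      have hwy : w ≠ y := fun h => hyC (h ▸ hwC)
      rw [hsne z hzy] at hzv
      rw [hsne w hwy] at hwv
      exact inv.kinj z w v hzv hwv hzC hwC
    · -- c1
      intro v hvC
      have hvy : v ≠ y := fun h => hyC (h ▸ hvC)
      obtain ⟨u, huC, hu⟩ := inv.c1 v hvC
      exact ⟨u, huC, by rw [hsne v hvy]; exact hu⟩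
end CF

namespace CF
open SimpleGraph
open scoped Classical

variable {V : Type*}

def Hyp (H : SimpleGraph V) : Prop :=
  ∀ K : H.ConnectedComponent,
    {e ∈ H.edgeSet | ∀ v ∈ e, H.connectedComponentMk v = K}.ncard ≤ K.supp.ncard

lemma hyp_delete [Finite V] {H : SimpleGraph V} {x y : V} (hxy : H.Adj x y)
    (hleaf : ∀ z, H.Adj x z → z = y) (hH : Hyp H) : Hyp (H.deleteEdges {s(x,y)}) := by
  classical
  set H' := H.deleteEdges {s(x,y)} with hH'
  have hle : H' ≤ H := SimpleGraph.deleteEdges_le _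
  have hAdj' : ∀ a b, H'.Adj a b ↔ H.Adj a b ∧ ¬((a = x ∧ b = y) ∨ (a = y ∧ b = x)) := by
    intro a b
    rw [hH', SimpleGraph.deleteEdges_adj]
    constructor
    · rintro ⟨h1, h2⟩
      refine ⟨h1, fun hc => h2 ?_⟩
      simp only [Set.mem_singleton_iff, Sym2.eq_iff]
      exact hc
    · rintro ⟨h1, h2⟩
      refine ⟨h1, fun hc => h2 ?_⟩
      simpa only [Set.mem_singleton_iff, Sym2.eq_iff] using hc
  have hxiso : ∀ z, ¬ H'.Adj x z := by
    intro z h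
    have h2 := (hAdj' x z).1 h
    have hz := hleaf z h2.1
    exact h2.2 (Or.inl ⟨rfl, hz⟩)
  have hxonly : ∀ z, H'.Reachable x z → z = x := by
    intro z h
    obtain ⟨p⟩ := h
    cases p with
    | nil => rfl
    | cons h q => exact absurd h (hxiso _)
  have hreachn : ∀ (n : ℕ) (u w : V) (p : H.Walk u w), p.length ≤ n → u ≠ x → w ≠ x →
      H'.Reachable u w := by
    intro n
    induction n with
    | zero =>
      intro u w p hp hu hw
      cases p with
      | nil => exact Reachable.refl u
      | cons h q => simp [SimpleGraph.Walk.length_cons] at hp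
    | succ n ih =>
      intro u w p hp hu hw
      cases p with
      | nil => exact Reachable.refl u
      | @cons _ v _ h q =>
        by_cases hvx : v = x
        · subst hvx
          cases q with
          | nil => exact absurd rfl hw
          | @cons _ z _ h2 r =>
            have hzy : z = y := hleaf z h2
            have huy : u = y := hleaf u h.symm
            have hr : H'.Reachable z w := by
              apply ih z w r
              · have := hp
                simp only [SimpleGraph.Walk.length_cons] at this
                omega
              · rw [hzy]; exact fun hc => hxy.ne hc.symm
              · exact hw
            have huz : u = z := by rw [huy, hzy]
            rw [huz]; exact hr
        · have hadj : H'.Adj u v := by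
            rw [hAdj' u v]
            refine ⟨h, ?_⟩
            rintro (⟨rfl, _⟩ | ⟨_, rfl⟩)
            · exact hu rfl
            · exact hvx rfl
          have : q.length ≤ n := by
            have := hp
            simp only [SimpleGraph.Walk.length_cons] at this
            omega
          exact (hadj.reachable).trans (ih v w q this hvx hw)
  have hreach : ∀ u w, u ≠ x → w ≠ x → H.Reachable u w → H'.Reachable u w := by
    intro u w hu hw h
    obtain ⟨p⟩ := h
    exact hreachn p.length u w p le_rfl hu hw
  have hreach' : ∀ u w, H'.Reachable u w → H.Reachable u w := fun u w h => h.mono hle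
  intro K'
  by_cases hxK : H'.connectedComponentMk x = K'
  · -- the component of x : no edges
    have hempty : {e ∈ H'.edgeSet | ∀ v ∈ e, H'.connectedComponentMk v = K'} = ∅ := by
      ext e
      simp only [Set.mem_setOf_eq, Set.mem_empty_iff_false, iff_false, not_and]
      intro he hcomp
      induction e with
      | _ a b =>
        have hadj : H'.Adj a b := he
        have hax : H'.connectedComponentMk a = H'.connectedComponentMk x := by
          rw [hcomp a (Sym2.mem_mk_left a b), hxK]
        have hrax : H'.Reachable x a := (SimpleGraph.ConnectedComponent.eq.1 hax).symm
        have : a = x := hxonly a hrax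
        rw [this] at hadj
        exact hxiso b hadj
    rw [hempty]
    simp [Set.ncard_empty]
  · obtain ⟨v0, hv0⟩ := K'.exists_rep
    have hv0x : v0 ≠ x := by
      intro h; rw [h] at hv0; exact hxK hv0
    set K := H.connectedComponentMk v0 with hK
    have hmem' : ∀ w, w ∈ K'.supp ↔ H'.Reachable w v0 := by
      intro w
      rw [SimpleGraph.ConnectedComponent.mem_supp_iff _ _, ← hv0]
      exact SimpleGraph.ConnectedComponent.eq
    have hmem : ∀ w, w ∈ K.supp ↔ H.Reachable w v0 := by
      intro w
      rw [SimpleGraph.ConnectedComponent.mem_supp_iff _ _, hK]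
      exact SimpleGraph.ConnectedComponent.eq
    have hsuppfin : K.supp.Finite := Set.toFinite _
    have hedgefin : ∀ (G : SimpleGraph V) (P : Sym2 V → Prop),
        {e ∈ G.edgeSet | P e}.Finite := fun _ _ => Set.toFinite _
    by_cases hxv0 : H.Reachable x v0
    · -- x's old component
      have hsupp : K'.supp = K.supp \ {x} := by
        ext w
        simp only [Set.mem_diff, Set.mem_singleton_iff]
        rw [hmem' w, hmem w]
        constructor
        · intro h
          have hwx : w ≠ x := by
            intro hc
            rw [hc] at h
            exact hv0x (hxonly v0 h)
          exact ⟨hreach' w v0 h, hwx⟩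
        · rintro ⟨h, hwx⟩
          exact hreach w v0 hwx hv0x h
      have hsub : {e ∈ H'.edgeSet | ∀ v ∈ e, H'.connectedComponentMk v = K'} ⊆
          {e ∈ H.edgeSet | ∀ v ∈ e, H.connectedComponentMk v = K} \ {s(x,y)} := by
        intro e he
        obtain ⟨he1, he2⟩ := he
        have hee : e ∈ H.edgeSet \ {s(x,y)} := by
          rw [← SimpleGraph.edgeSet_deleteEdges]; exact he1
        refine ⟨⟨hee.1, ?_⟩, hee.2⟩
        intro v hv
        have h2 := he2 v hv
        have hm : v ∈ K'.supp := (SimpleGraph.ConnectedComponent.mem_supp_iff _ _).2 h2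
        rw [hsupp] at hm
        exact (SimpleGraph.ConnectedComponent.mem_supp_iff _ _).1 hm.1
      have hxyK : s(x,y) ∈ {e ∈ H.edgeSet | ∀ v ∈ e, H.connectedComponentMk v = K} := by
        refine ⟨H.mem_edgeSet.2 hxy, ?_⟩
        intro v hv
        rcases Sym2.mem_iff.1 hv with rfl | rfl
        · exact SimpleGraph.ConnectedComponent.sound hxv0
        · exact SimpleGraph.ConnectedComponent.sound (hxy.symm.reachable.trans hxv0)
      have hxmem : x ∈ K.supp :=
        (SimpleGraph.ConnectedComponent.mem_supp_iff _ _).2 (SimpleGraph.ConnectedComponent.sound hxv0)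
      calc {e ∈ H'.edgeSet | ∀ v ∈ e, H'.connectedComponentMk v = K'}.ncard
          ≤ ({e ∈ H.edgeSet | ∀ v ∈ e, H.connectedComponentMk v = K} \ {s(x,y)}).ncard :=
            Set.ncard_le_ncard hsub (Set.toFinite _)
        _ = {e ∈ H.edgeSet | ∀ v ∈ e, H.connectedComponentMk v = K}.ncard - 1 :=
            Set.ncard_diff_singleton_of_mem hxyK
        _ ≤ K.supp.ncard - 1 := Nat.sub_le_sub_right (hH K) 1
        _ = (K.supp \ {x}).ncard := (Set.ncard_diff_singleton_of_mem hxmem).symm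
        _ = K'.supp.ncard := by rw [hsupp]
    · -- component untouched
      have hsupp : K'.supp = K.supp := by
        ext w
        rw [hmem' w, hmem w]
        constructor
        · exact hreach' w v0
        · intro h
          have hwx : w ≠ x := by
            intro hc; rw [hc] at h; exact hxv0 h
          exact hreach w v0 hwx hv0x h
      have hsub : {e ∈ H'.edgeSet | ∀ v ∈ e, H'.connectedComponentMk v = K'} ⊆
          {e ∈ H.edgeSet | ∀ v ∈ e, H.connectedComponentMk v = K} := by
        intro e he
        obtain ⟨he1, he2⟩ := he
        have hee : e ∈ H.edgeSet \ {s(x,y)} := by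
          rw [← SimpleGraph.edgeSet_deleteEdges]; exact he1
        refine ⟨hee.1, ?_⟩
        intro v hv
        have h2 := he2 v hv
        have : v ∈ K'.supp := (SimpleGraph.ConnectedComponent.mem_supp_iff _ _).2 h2
        rw [hsupp] at this
        exact (SimpleGraph.ConnectedComponent.mem_supp_iff _ _).1 this
      calc {e ∈ H'.edgeSet | ∀ v ∈ e, H'.connectedComponentMk v = K'}.ncard
          ≤ {e ∈ H.edgeSet | ∀ v ∈ e, H.connectedComponentMk v = K}.ncard :=
            Set.ncard_le_ncard hsub (hedgefin H _)
        _ ≤ K.supp.ncard := hH K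
        _ = K'.supp.ncard := by rw [hsupp]
end CF

namespace CF
open SimpleGraph
open scoped Classical

variable {V : Type*}

section Base

def patf (k mm : ℕ) : Fin 3 :=
  if k = mm - 1 then 2 else if k % 2 = 0 then 0 else 1

lemma patf_ne (k M : ℕ) (h3 : 3 ≤ M) (hk : k < M) (k' : ℕ)
    (hk' : (k + 1 = M ∧ k' = 0) ∨ (k + 1 < M ∧ k' = k + 1)) : patf k M ≠ patf k' M := by
  unfold patf
  rcases hk' with ⟨h1, rfl⟩ | ⟨h1, rfl⟩
  · rw [if_pos (by omega : k = M - 1), if_neg (by omega : ¬ (0 : ℕ) = M - 1)]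
    decide
  · rw [if_neg (by omega : ¬ k = M - 1)]
    by_cases h2' : k + 1 = M - 1
    · rw [if_pos h2']
      by_cases hk2 : k % 2 = 0
      · rw [if_pos hk2]; decide
      · rw [if_neg hk2]; decide
    · rw [if_neg h2']
      by_cases hk2 : k % 2 = 0
      · rw [if_pos hk2, if_neg (by omega : ¬ (k+1) % 2 = 0)]; decide
      · rw [if_neg hk2, if_pos (by omega : (k+1) % 2 = 0)]; decide

lemma base_construct [Finite V] (H : SimpleGraph V)
    (h0 : ∀ v a, H.Adj v a → ∃ b, H.Adj v b ∧ b ≠ a)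
    (h2 : ∀ v a b c, H.Adj v a → H.Adj v b → H.Adj v c → a ≠ c → b ≠ c → a = b) :
    ∃ s C ℓ, Inv H s C ℓ := by
  classical
  have hDfin : Finite H.Dart :=
    Finite.of_injective (fun d => d.toProd) (fun d1 d2 h => SimpleGraph.Dart.ext _ _ h)
  -- "other" neighbour of d.snd besides d.fst
  let other : H.Dart → V := fun d => Classical.choose (h0 d.snd d.fst d.adj.symm)
  have other_adj : ∀ d : H.Dart, H.Adj d.snd (other d) :=
    fun d => (Classical.choose_spec (h0 d.snd d.fst d.adj.symm)).1
  have other_ne : ∀ d : H.Dart, other d ≠ d.fst :=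
    fun d => (Classical.choose_spec (h0 d.snd d.fst d.adj.symm)).2
  have other_uniq : ∀ (d : H.Dart) (c : V), H.Adj d.snd c → c ≠ d.fst → c = other d := by
    intro d c hc hcne
    exact h2 d.snd c (other d) d.fst hc (other_adj d) d.adj.symm hcne (other_ne d)
  -- the rotation permutation on darts
  have hsymm_fst : ∀ d : H.Dart, d.symm.fst = d.snd := fun d => rfl
  have hsymm_snd : ∀ d : H.Dart, d.symm.snd = d.fst := fun d => rfl
  let σf : H.Dart → H.Dart := fun d => ⟨(d.snd, other d), other_adj d⟩
  let σg : H.Dart → H.Dart := fun d => ⟨(other d.symm, d.fst), (other_adj d.symm).symm⟩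
  have hgf : ∀ d, σg (σf d) = d := by
    intro d
    apply SimpleGraph.Dart.ext
    have h1 : (σf d).symm.snd = d.snd := rfl
    have h2' : (σf d).symm.fst = other d := rfl
    have hoth : other ((σf d).symm) = d.fst := by
      refine (other_uniq (σf d).symm d.fst ?_ ?_).symm
      · exact d.adj.symm
      · exact fun hc => other_ne d hc.symm
    show (other ((σf d).symm), (σf d).fst) = d.toProd
    rw [hoth]
  have hfg : ∀ d, σf (σg d) = d := by
    intro d
    apply SimpleGraph.Dart.ext
    have hoth : other (σg d) = d.snd := by
      refine (other_uniq (σg d) d.snd ?_ ?_).symm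
      · exact d.adj
      · exact fun hc => other_ne d.symm hc.symm
    show ((σg d).snd, other (σg d)) = d.toProd
    rw [hoth]
  let σ : Equiv.Perm H.Dart := ⟨σf, σg, hgf, hfg⟩
  have hσ : ∀ d, σ d = σf d := fun d => rfl
  have hσinv : ∀ d, σ⁻¹ d = σg d := fun d => rfl
  have sigma_ne : ∀ d, σ d ≠ d := by
    intro d h
    have : (σ d).fst = d.fst := by rw [h]
    have h2'' : d.snd = d.fst := this
    exact H.irrefl (h2'' ▸ d.adj)
  have sigma_symm_ne : ∀ d, σ d.symm ≠ d := by
    intro d h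
    have : (σ d.symm).snd = d.snd := by rw [h]
    have h2'' : other d.symm = d.snd := this
    exact other_ne d.symm h2''
  have sigma_sq_ne : ∀ d, σ (σ d) ≠ d := by
    intro d h
    have : (σ (σ d)).fst = d.fst := by rw [h]
    have h2'' : other d = d.fst := this
    exact other_ne d h2''
  -- τ conjugation
  let τ : Equiv.Perm H.Dart :=
    ⟨SimpleGraph.Dart.symm, SimpleGraph.Dart.symm,
      SimpleGraph.Dart.symm_symm, SimpleGraph.Dart.symm_symm⟩
  have tau_ne : ∀ d : H.Dart, d.symm ≠ d := by
    intro d h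
    have : d.symm.fst = d.fst := by rw [h]
    have h2'' : d.snd = d.fst := this
    exact H.irrefl (h2'' ▸ d.adj)
  have conj : τ * σ * τ = σ⁻¹ := by
    apply Equiv.ext
    intro d
    apply SimpleGraph.Dart.ext
    rfl
  have tau_sq : τ * τ = 1 := by
    apply Equiv.ext
    intro d
    exact SimpleGraph.Dart.symm_symm d
  have tinv : τ⁻¹ = τ := inv_eq_of_mul_eq_one_right tau_sq
  have conjz : ∀ n : ℤ, τ * (σ ^ n) * τ = σ ^ (-n) := by
    intro n
    have h1 : (MulAut.conj τ) (σ ^ n) = ((MulAut.conj τ) σ) ^ n := map_zpow _ _ _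
    have hc2 : (MulAut.conj τ) σ = σ⁻¹ := by
      have : (MulAut.conj τ) σ = τ * σ * τ⁻¹ := rfl
      rw [this, tinv]; exact conj
    rw [hc2] at h1
    have h3 : (MulAut.conj τ) (σ ^ n) = τ * σ ^ n * τ⁻¹ := rfl
    rw [h3, tinv] at h1
    rw [h1, inv_zpow, zpow_neg]
  have conjz' : ∀ (n : ℤ) (d : H.Dart), ((σ ^ n) d.symm).symm = (σ ^ (-n)) d := by
    intro n d
    have := congrArg (fun (p : Equiv.Perm H.Dart) => p d) (conjz n)
    simp at this ⊢; exact this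
  have hcomp : ∀ (a b : ℤ) (d : H.Dart), (σ ^ a) ((σ ^ b) d) = (σ ^ (a + b)) d := by
    intro a b d
    rw [← Equiv.Perm.mul_apply, ← zpow_add]
  -- key lemma : no power of σ reverses a dart
  have key : ∀ (n : ℤ) (d : H.Dart), (σ ^ n) d ≠ d.symm := by
    intro n d h
    have hrev : ∀ (k : ℤ), ((σ ^ k) d).symm = (σ ^ (n - k)) d := by
      intro k
      have h1 : ((σ ^ (-k)) d.symm).symm = (σ ^ k) d := by
        rw [conjz' (-k) d, neg_neg]
      have h2'' : ((σ ^ k) d).symm = (σ ^ (-k)) d.symm := by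
        rw [← h1, SimpleGraph.Dart.symm_symm]
      rw [h2'', ← h, hcomp]
      ring_nf
    rcases Int.even_or_odd n with ⟨k, hk⟩ | ⟨k, hk⟩
    · -- n = 2k : τ has a fixed point
      have := hrev k
      have heq : n - k = k := by omega
      rw [heq] at this
      exact tau_ne _ this
    · -- n = 2k+1 : στ has a fixed point
      have h1 := hrev (k + 1)
      have heq : n - (k + 1) = k := by omega
      rw [heq] at h1
      have h3 : σ (((σ ^ ((k:ℤ)+1)) d).symm) = (σ ^ ((k:ℤ)+1)) d := by
        rw [h1]
        have h4 : σ ((σ ^ (k:ℤ)) d) = (σ ^ (1:ℤ)) ((σ ^ (k:ℤ)) d) := by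
          rw [zpow_one]
        rw [h4, hcomp]
        norm_num [add_comm]
      exact sigma_symm_ne _ h3
  -- orbit quotient
  let sd : Setoid H.Dart := ⟨fun d d' => ∃ n : ℤ, (σ ^ n) d = d',
    ⟨fun d => ⟨0, by simp⟩,
     fun {d d'} h => by
      obtain ⟨n, hn⟩ := h
      exact ⟨-n, by rw [← hn, hcomp]; simp⟩,
     fun {a b c} h1 h2 => by
      obtain ⟨n, hn⟩ := h1
      obtain ⟨m, hm⟩ := h2
      exact ⟨m + n, by rw [← hm, ← hn, hcomp]⟩⟩⟩
  have sdr : ∀ d d', (sd.r d d' ↔ ∃ n : ℤ, (σ ^ n) d = d') := fun _ _ => Iff.rfl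
  let mkQ : H.Dart → Quotient sd := fun d => Quotient.mk sd d
  have mkQ_sigma : ∀ d, mkQ (σ d) = mkQ d := by
    intro d
    refine Quotient.sound ⟨-1, ?_⟩
    have h1 : σ d = (σ ^ (1:ℤ)) d := by rw [zpow_one]
    rw [h1, hcomp]
    simp
  -- reversal on orbits
  let τQ : Quotient sd → Quotient sd := Quotient.map (fun d => d.symm) (by
    rintro d d' ⟨n, hn⟩
    refine ⟨-n, ?_⟩
    have h1 := conjz' (-n) d
    rw [neg_neg] at h1
    have h2' : ((σ ^ (-n)) d.symm) = ((σ ^ (-n)) d.symm).symm.symm :=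
      (SimpleGraph.Dart.symm_symm _).symm
    rw [h2', h1, hn])
  have τQ_mk : ∀ d, τQ (mkQ d) = mkQ d.symm := fun d => rfl
  have τQ_invol : ∀ q, τQ (τQ q) = q := by
    intro q
    induction q using Quotient.ind with
    | _ d =>
      show τQ (τQ (mkQ d)) = mkQ d
      rw [τQ_mk, τQ_mk, SimpleGraph.Dart.symm_symm]
  have τQ_ne : ∀ q, τQ q ≠ q := by
    intro q
    induction q using Quotient.ind with
    | _ d =>
      intro h
      have h2' : mkQ d.symm = mkQ d := by rw [← τQ_mk]; exact h
      obtain ⟨n, hn⟩ := Quotient.exact h2'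
      exact key n d.symm (by rw [hn, SimpleGraph.Dart.symm_symm])
  -- pair quotient and the selection
  let sd2 : Setoid (Quotient sd) := ⟨fun q q' => q' = q ∨ q' = τQ q,
    ⟨fun q => Or.inl rfl,
     fun {q q'} h => by
      rcases h with rfl | h
      · exact Or.inl rfl
      · right; rw [h, τQ_invol],
     fun {a b c} h1 h2 => by
      rcases h1 with rfl | h1
      · exact h2
      · rcases h2 with rfl | h2
        · exact Or.inr h1
        · left; rw [h2, h1, τQ_invol]⟩⟩
  have mk2_tau : ∀ q, Quotient.mk sd2 (τQ q) = Quotient.mk sd2 q := by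
    intro q
    exact (Quotient.sound (Or.inr rfl)).symm
  have out_rel : ∀ q, (Quotient.mk sd2 q).out = q ∨ (Quotient.mk sd2 q).out = τQ q := by
    intro q
    have h1 : Quotient.mk sd2 ((Quotient.mk sd2 q).out) = Quotient.mk sd2 q :=
      Quotient.out_eq _
    have h2' := Quotient.exact h1
    rcases h2' with h | h
    · exact Or.inl h.symm
    · right
      conv_rhs => rw [h]
      rw [τQ_invol]
  have pick_iff : ∀ q, ((Quotient.mk sd2 (τQ q)).out = τQ q) ↔
      ¬ ((Quotient.mk sd2 q).out = q) := by
    intro q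
    rw [mk2_tau q]
    rcases out_rel q with h | h
    · constructor
      · intro h1 _
        exact τQ_ne q (h.symm.trans h1).symm
      · intro h1
        exact absurd h h1
    · constructor
      · intro _ h2'
        exact τQ_ne q ((h2'.symm.trans h).symm)
      · intro _
        exact h
  let chosen : H.Dart → Prop := fun d => (Quotient.mk sd2 (mkQ d)).out = mkQ d
  have chosen_sigma : ∀ d, chosen (σ d) ↔ chosen d := by
    intro d
    show (Quotient.mk sd2 (mkQ (σ d))).out = mkQ (σ d) ↔ _
    rw [mkQ_sigma]
  have chosen_symm : ∀ d : H.Dart, chosen d.symm ↔ ¬ chosen d := by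
    intro d
    show (Quotient.mk sd2 (mkQ d.symm)).out = mkQ d.symm ↔ _
    rw [← τQ_mk]
    exact pick_iff (mkQ d)
  have chosen_uniq : ∀ d1 d2 : H.Dart, chosen d1 → chosen d2 → d1.fst = d2.fst → d1 = d2 := by
    intro d1 d2 hc1 hc2 hfst
    by_cases hsnd : d1.snd = d2.snd
    · exact SimpleGraph.Dart.ext _ _ (Prod.ext hfst.symm hsnd.symm).symm
    · exfalso
      have hd2 : d2 = σ d1.symm := by
        apply SimpleGraph.Dart.ext
        have hadj2 : H.Adj d1.symm.snd d2.snd := by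
          show H.Adj d1.fst d2.snd
          rw [hfst]; exact d2.adj
        have hne2 : d2.snd ≠ d1.symm.fst := fun hc => hsnd hc.symm
        have heq := other_uniq d1.symm d2.snd hadj2 hne2
        show d2.toProd = (d1.symm.snd, other d1.symm)
        rw [← heq]
        exact Prod.ext hfst.symm rfl
      have hcc : chosen (σ d1.symm) := by rw [← hd2]; exact hc2
      rw [chosen_sigma, chosen_symm] at hcc
      exact hcc hc1
  -- successor map
  let s : V → Option V := fun v =>
    if h : ∃ d : H.Dart, chosen d ∧ d.fst = v then some (Classical.choose h).snd else none
  have schar : ∀ a b : V, s a = some b ↔ ∃ h : H.Adj a b, chosen ⟨(a,b), h⟩ := by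
    intro a b
    constructor
    · intro hs
      by_cases h : ∃ d : H.Dart, chosen d ∧ d.fst = a
      · have hd := Classical.choose_spec h
        have hb : (Classical.choose h).snd = b := by
          have hsome : s a = some (Classical.choose h).snd := dif_pos h
          rw [hs] at hsome
          exact (Option.some_inj.1 hsome).symm
        have hadj : H.Adj a b := by
          have hh := (Classical.choose h).adj
          rw [hd.2, hb] at hh
          exact hh
        refine ⟨hadj, ?_⟩
        have heq : (⟨(a,b), hadj⟩ : H.Dart) = Classical.choose h := by
          apply SimpleGraph.Dart.ext
          rw [Prod.ext_iff]
          exact ⟨hd.2.symm, hb.symm⟩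
        rw [heq]
        exact hd.1
      · have : s a = none := dif_neg h
        rw [this] at hs
        exact absurd hs (by simp)
    · rintro ⟨hadj, hch⟩
      have h : ∃ d : H.Dart, chosen d ∧ d.fst = a := ⟨⟨(a,b), hadj⟩, hch, rfl⟩
      have hd := Classical.choose_spec h
      have heq : Classical.choose h = ⟨(a,b), hadj⟩ := chosen_uniq _ _ hd.1 hch hd.2
      show dite _ _ _ = some b
      rw [dif_pos h, heq]
  have dart_eta : ∀ d : H.Dart, (⟨(d.fst, d.snd), d.adj⟩ : H.Dart) = d := by
    intro d
    apply SimpleGraph.Dart.ext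
    rfl
  have s_some_of_chosen : ∀ d : H.Dart, chosen d → s d.fst = some d.snd := by
    intro d hd
    refine (schar d.fst d.snd).2 ⟨d.adj, ?_⟩
    rw [dart_eta d]
    exact hd
  -- periods and positions
  have hcompn : ∀ (a b : ℕ) (d : H.Dart), (σ ^ a) ((σ ^ b) d) = (σ ^ (a + b)) d := by
    intro a b d
    rw [← Equiv.Perm.mul_apply, ← pow_add]
  have hstep : ∀ (k : ℕ) (e : H.Dart), (σ ^ (k + 1)) e = σ ((σ ^ k) e) := by
    intro k e
    rw [pow_succ']
    rfl
  have hper : ∀ d : H.Dart, ∃ k : ℕ, 0 < k ∧ (σ ^ k) d = d := by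
    intro d
    haveI := hDfin
    obtain ⟨i, j, hne, heq⟩ :=
      Finite.exists_ne_map_eq_of_infinite (fun n : ℕ => (σ ^ n) d)
    rcases Nat.lt_or_ge i j with hij | hij
    · refine ⟨j - i, by omega, ?_⟩
      have h1 : (σ ^ i) ((σ ^ (j - i)) d) = (σ ^ i) d := by
        rw [hcompn]
        have : i + (j - i) = j := by omega
        rw [this]
        exact heq.symm
      exact (σ ^ i).injective h1
    · have hij' : j < i := by omega
      refine ⟨i - j, by omega, ?_⟩
      have h1 : (σ ^ j) ((σ ^ (i - j)) d) = (σ ^ j) d := by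
        rw [hcompn]
        have : j + (i - j) = i := by omega
        rw [this]
        exact heq
      exact (σ ^ j).injective h1
  let rep : H.Dart → H.Dart := fun d => (mkQ d).out
  have rep_spec : ∀ d, ∃ n : ℤ, (σ ^ n) (rep d) = d :=
    fun d => Quotient.exact (Quotient.out_eq (mkQ d))
  have rep_sigma : ∀ d, rep (σ d) = rep d := by
    intro d
    show (mkQ (σ d)).out = (mkQ d).out
    rw [mkQ_sigma]
  let Mof : H.Dart → ℕ := fun r => Nat.find (hper r)
  have M_pos : ∀ r, 0 < Mof r := fun r => (Nat.find_spec (hper r)).1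
  have M_per : ∀ r, (σ ^ (Mof r)) r = r := fun r => (Nat.find_spec (hper r)).2
  have M_min : ∀ r k, 0 < k → (σ ^ k) r = r → Mof r ≤ k :=
    fun r k hk hkr => Nat.find_le ⟨hk, hkr⟩
  have M_ge3 : ∀ r, 3 ≤ Mof r := by
    intro r
    rcases Nat.lt_or_ge (Mof r) 3 with h | h
    · exfalso
      interval_cases hM : (Mof r)
      · exact Nat.lt_irrefl 0 (hM ▸ M_pos r)
      · have := M_per r
        rw [hM, pow_one] at this
        exact sigma_ne r this
      · have := M_per r
        rw [hM, pow_succ, pow_one] at this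
        have h2' : σ (σ r) = r := this
        exact sigma_sq_ne r h2'
    · exact h
  have rep_reach : ∀ d, ∃ k : ℕ, (σ ^ k) (rep d) = d := by
    intro d
    obtain ⟨n, hn⟩ := rep_spec d
    have hzper : ∀ t : ℕ, (σ ^ ((t : ℤ) * (Mof (rep d)))) (rep d) = rep d := by
      intro t
      induction t with
      | zero => simp
      | succ mm ih =>
        have hcast : ((mm + 1 : ℕ) : ℤ) * (Mof (rep d)) =
            ((Mof (rep d) : ℤ)) + (mm : ℕ) * (Mof (rep d)) := by push_cast; ring
        rw [hcast, ← hcomp, ih, zpow_natCast, M_per]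
    rcases le_or_gt 0 n with hn0 | hn0
    · refine ⟨n.toNat, ?_⟩
      rw [← zpow_natCast, Int.toNat_of_nonneg hn0, hn]
    · set t : ℕ := (-n).toNat with ht'
      have ht : (t : ℤ) = -n := Int.toNat_of_nonneg (by omega)
      have hp1 : (1:ℤ) ≤ ((Mof (rep d)) : ℤ) := by exact_mod_cast M_pos (rep d)
      have hge : 0 ≤ n + (t:ℤ) * (Mof (rep d)) := by
        rw [ht]; nlinarith
      refine ⟨(n + (t:ℤ) * (Mof (rep d))).toNat, ?_⟩
      rw [← zpow_natCast, Int.toNat_of_nonneg hge, ← hcomp, hzper t, hn]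
  let pos : H.Dart → ℕ := fun d => Nat.find (rep_reach d)
  have pos_spec : ∀ d, (σ ^ (pos d)) (rep d) = d := fun d => Nat.find_spec (rep_reach d)
  have pos_min : ∀ d k, (σ ^ k) (rep d) = d → pos d ≤ k := fun d k hk => Nat.find_le hk
  have pos_lt : ∀ d, pos d < Mof (rep d) := by
    intro d
    rcases Nat.lt_or_ge (pos d) (Mof (rep d)) with h | h
    · exact h
    · exfalso
      have h1 : (σ ^ (pos d - Mof (rep d))) (rep d) = d := by
        have h2' : (σ ^ (pos d - Mof (rep d))) ((σ ^ (Mof (rep d))) (rep d)) = d := by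
          rw [hcompn]
          have : pos d - Mof (rep d) + Mof (rep d) = pos d := by omega
          rw [this]
          exact pos_spec d
        rw [M_per] at h2'
        exact h2'
      have := pos_min d _ h1
      have := M_pos (rep d)
      omega
  have pos_succ : ∀ d, (pos d + 1 < Mof (rep d) ∧ pos (σ d) = pos d + 1) ∨
      (pos d + 1 = Mof (rep d) ∧ pos (σ d) = 0) := by
    intro d
    have hlt := pos_lt d
    have hrs := rep_sigma d
    rcases Nat.lt_or_ge (pos d + 1) (Mof (rep d)) with h | h
    · left
      refine ⟨h, ?_⟩
      have hsp : (σ ^ (pos d + 1)) (rep (σ d)) = σ d := by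
        rw [hrs, hstep, pos_spec d]
      have hle := pos_min (σ d) _ hsp
      rcases Nat.lt_or_ge (pos (σ d)) (pos d + 1) with hlt2 | hge2
      · exfalso
        have hps := pos_spec (σ d)
        rw [hrs] at hps
        rcases Nat.eq_zero_or_pos (pos (σ d)) with h0 | hpos0
        · -- rep d = σ d  →  σ^(pos d + 1) (rep d) = rep d with pos+1 < M
          rw [h0, pow_zero] at hps
          simp only [Equiv.Perm.one_apply] at hps
          have hper1 : (σ ^ (pos d + 1)) (rep d) = rep d := by
            rw [hstep, pos_spec d, ← hps]
          have := M_min (rep d) (pos d + 1) (by omega) hper1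
          omega
        · -- cancel one σ
          have he : pos (σ d) = (pos (σ d) - 1) + 1 := by omega
          rw [he, hstep] at hps
          have hc2 : (σ ^ (pos (σ d) - 1)) (rep d) = d := σ.injective hps
          have := pos_min d _ hc2
          omega
      · omega
    · right
      have heq : pos d + 1 = Mof (rep d) := by omega
      refine ⟨heq, ?_⟩
      have hsd : σ d = rep d := by
        have h1 : (σ ^ (pos d + 1)) (rep d) = σ d := by
          rw [hstep, pos_spec d]
        rw [heq, M_per] at h1
        exact h1.symm
      have : (σ ^ (0:ℕ)) (rep (σ d)) = σ d := by
        rw [pow_zero, hrs, hsd]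
        rfl
      have hle := pos_min (σ d) 0 this
      omega
  -- the colouring
  let ℓ : V → Fin 3 := fun v =>
    if h : ∃ d : H.Dart, chosen d ∧ d.fst = v then
      patf (pos (Classical.choose h)) (Mof (rep (Classical.choose h))) else 0
  have lchar : ∀ d : H.Dart, chosen d → ℓ d.fst = patf (pos d) (Mof (rep d)) := by
    intro d hd
    have h : ∃ d' : H.Dart, chosen d' ∧ d'.fst = d.fst := ⟨d, hd, rfl⟩
    have hd' := Classical.choose_spec h
    have heq : Classical.choose h = d := chosen_uniq _ _ hd'.1 hd hd'.2
    show dite _ _ _ = _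
    rw [dif_pos h, heq]
  -- the invariant
  refine ⟨s, {v | s v ≠ none}, ℓ, ?_, ?_, ?_, ?_, ?_, ?_, ?_, ?_⟩
  · -- e1
    intro a b
    constructor
    · intro hadj
      by_cases hch : chosen ⟨(a,b), hadj⟩
      · exact Or.inl ((schar a b).2 ⟨hadj, hch⟩)
      · right
        refine (schar b a).2 ⟨hadj.symm, ?_⟩
        have hsymm : (⟨(b,a), hadj.symm⟩ : H.Dart) = (⟨(a,b), hadj⟩ : H.Dart).symm := by
          apply SimpleGraph.Dart.ext
          rfl
        rw [hsymm]
        exact (chosen_symm _).2 hch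
    · rintro (h | h)
      · obtain ⟨hadj, _⟩ := (schar a b).1 h
        exact hadj
      · obtain ⟨hadj, _⟩ := (schar b a).1 h
        exact hadj.symm
  · -- e2
    intro a b hab hba
    obtain ⟨hadj, hch⟩ := (schar a b).1 hab
    obtain ⟨hadj', hch'⟩ := (schar b a).1 hba
    have hsymm : (⟨(b,a), hadj'⟩ : H.Dart) = (⟨(a,b), hadj⟩ : H.Dart).symm := by
      apply SimpleGraph.Dart.ext
      rfl
    rw [hsymm] at hch'
    exact ((chosen_symm _).1 hch') hch
  · -- ha
    intro a b hab
    obtain ⟨hadj, hch⟩ := (schar a b).1 hab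
    set D : H.Dart := ⟨(a,b), hadj⟩ with hD
    have hfa : D.fst = a := rfl
    have hfb : (σ D).fst = b := rfl
    have hchs : chosen (σ D) := (chosen_sigma D).2 hch
    have hla : ℓ a = patf (pos D) (Mof (rep D)) := by
      rw [← hfa]; exact lchar D hch
    have hlb : ℓ b = patf (pos (σ D)) (Mof (rep D)) := by
      rw [← hfb, lchar (σ D) hchs, rep_sigma]
    rw [hla, hlb]
    exact patf_ne (pos D) (Mof (rep D)) (M_ge3 _) (pos_lt D) (pos (σ D)) (by
      rcases pos_succ D with ⟨h1, h2'⟩ | ⟨h1, h2'⟩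
      · exact Or.inr ⟨h1, h2'⟩
      · exact Or.inl ⟨h1, h2'⟩)
  · -- h4
    intro y0 a b hy0 hay hby
    exfalso
    obtain ⟨hadj, hch⟩ := (schar a y0).1 hay
    have hchs : chosen (σ ⟨(a,y0), hadj⟩) := (chosen_sigma _).2 hch
    have := s_some_of_chosen _ hchs
    have hfst : (σ (⟨(a,y0), hadj⟩ : H.Dart)).fst = y0 := rfl
    rw [hfst] at this
    rw [this] at hy0
    exact absurd hy0 (by simp)
  · -- hb
    intro z v u hzv hvu hvC
    exfalso
    exact hvC (by show s v ≠ none; rw [hvu]; exact Option.some_ne_none _)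
  · -- hk
    intro z w v hzv hwv hwC hzC
    exfalso
    exact hzC (by show s z ≠ none; rw [hzv]; exact Option.some_ne_none _)
  · -- kinj
    intro z w v hzv hwv _ _
    obtain ⟨hadj, hch⟩ := (schar z v).1 hzv
    obtain ⟨hadj', hch'⟩ := (schar w v).1 hwv
    have h1 : chosen (σ ⟨(z,v), hadj⟩) := (chosen_sigma _).2 hch
    have h2' : chosen (σ ⟨(w,v), hadj'⟩) := (chosen_sigma _).2 hch'
    have heq : σ (⟨(z,v), hadj⟩ : H.Dart) = σ (⟨(w,v), hadj'⟩ : H.Dart) :=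
      chosen_uniq _ _ h1 h2' rfl
    have := σ.injective heq
    have : ((z,v) : V × V) = (w,v) := congrArg SimpleGraph.Dart.toProd this
    exact (Prod.ext_iff.1 this).1
  · -- c1
    intro v hvC
    simp only [Set.mem_setOf_eq] at hvC
    cases hu : s v with
    | none => exact absurd hu hvC
    | some u =>
      refine ⟨u, ?_, rfl⟩
      obtain ⟨hadj, hch⟩ := (schar v u).1 hu
      have hchs : chosen (σ ⟨(v,u), hadj⟩) := (chosen_sigma _).2 hch
      have := s_some_of_chosen _ hchs
      have hfst : (σ (⟨(v,u), hadj⟩ : H.Dart)).fst = u := rfl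
      rw [hfst] at this
      show s u ≠ none
      rw [this]
      exact Option.some_ne_none _

end Base
end CF

namespace CF
open SimpleGraph
open scoped Classical

variable {V : Type*}

lemma deg_dichotomy [Finite V] {H : SimpleGraph V} (hH : Hyp H)
    (hnl : ∀ x y, H.Adj x y → ∃ z, H.Adj x z ∧ z ≠ y) :
    ∀ v a b c, H.Adj v a → H.Adj v b → H.Adj v c → a ≠ c → b ≠ c → a = b := by
  classical
  haveI : Fintype V := Fintype.ofFinite V
  intro v a b c hva hvb hvc hac hbc
  by_contra hab
  -- v has three distinct neighbours a b c
  set K := H.connectedComponentMk v with hK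
  have hvK : v ∈ K.supp := SimpleGraph.ConnectedComponent.mem_supp_iff _ _ |>.2 rfl
  -- every vertex of the component has a neighbour
  have hnbr : ∀ w : V, w ∈ K.supp → ∃ z, H.Adj w z := by
    intro w hw
    have hr : H.Reachable w v :=
      SimpleGraph.ConnectedComponent.eq.1 ((SimpleGraph.ConnectedComponent.mem_supp_iff _ _).1 hw)
    obtain ⟨p⟩ := hr
    cases p with
    | nil => exact ⟨a, hva⟩
    | cons h q => exact ⟨_, h⟩
  -- adjacency closure of the component
  have hclose : ∀ w z : V, w ∈ K.supp → H.Adj w z → z ∈ K.supp := by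
    intro w z hw hadj
    rw [SimpleGraph.ConnectedComponent.mem_supp_iff] at hw ⊢
    rw [← hw]
    exact SimpleGraph.ConnectedComponent.eq.2 hadj.symm.reachable
  -- induced subgraph
  set S := K.supp with hS
  let G' := H.induce S
  have hGadj : ∀ w z : S, G'.Adj w z ↔ H.Adj w.val z.val := fun w z => Iff.rfl
  -- degrees agree
  have hdeg : ∀ w : S, G'.degree w = H.degree w.val := by
    intro w
    rw [← SimpleGraph.card_neighborSet_eq_degree, ← SimpleGraph.card_neighborSet_eq_degree]
    apply Fintype.card_congr
    refine ⟨fun z => ⟨z.val.val, z.2⟩, fun z => ⟨⟨z.val, hclose w.val z.val w.2 z.2⟩, z.2⟩, ?_, ?_⟩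
    · intro z; ext; rfl
    · intro z; ext; rfl
  -- handshake on the induced graph
  have hhs : ∑ w : S, G'.degree w = 2 * G'.edgeFinset.card :=
    SimpleGraph.sum_degrees_eq_twice_card_edges G'
  -- edge counting : G' edges inject into component edges
  have hinj : Function.Injective (Sym2.map (Subtype.val : S → V)) :=
    Sym2.map.injective Subtype.val_injective
  have himg : (Sym2.map (Subtype.val : S → V)) '' G'.edgeSet ⊆
      {e ∈ H.edgeSet | ∀ u ∈ e, H.connectedComponentMk u = K} := by
    rintro e ⟨e', he', rfl⟩
    induction e' with
    | _ x y =>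
      have hadj : G'.Adj x y := he'
      refine ⟨(hGadj x y).1 hadj, ?_⟩
      intro u hu
      simp only [Sym2.map_pair_eq, Sym2.mem_iff] at hu
      rcases hu with rfl | rfl
      · exact (SimpleGraph.ConnectedComponent.mem_supp_iff _ _).1 x.2
      · exact (SimpleGraph.ConnectedComponent.mem_supp_iff _ _).1 y.2
  have hcount : G'.edgeFinset.card ≤
      {e ∈ H.edgeSet | ∀ u ∈ e, H.connectedComponentMk u = K}.ncard := by
    calc G'.edgeFinset.card = G'.edgeSet.ncard := (Set.ncard_eq_toFinset_card' _).symm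
      _ = ((Sym2.map (Subtype.val : S → V)) '' G'.edgeSet).ncard :=
          (Set.ncard_image_of_injective _ hinj).symm
      _ ≤ _ := Set.ncard_le_ncard himg (Set.toFinite _)
  -- lower bound for degree sum
  have hdeg2 : ∀ w : S, 2 ≤ H.degree w.val := by
    intro w
    obtain ⟨z, hz⟩ := hnbr w.val w.2
    obtain ⟨z', hz', hne⟩ := hnl w.val z hz
    have hsub : ({z', z} : Finset V) ⊆ H.neighborFinset w.val := by
      intro u hu
      simp only [Finset.mem_insert, Finset.mem_singleton] at hu
      rcases hu with rfl | rfl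
      · exact (SimpleGraph.mem_neighborFinset _ _ _).2 hz'
      · exact (SimpleGraph.mem_neighborFinset _ _ _).2 hz
    have := Finset.card_le_card hsub
    rw [Finset.card_insert_of_notMem (by simpa using hne), Finset.card_singleton] at this
    exact this
  have hdeg3 : 3 ≤ H.degree v := by
    have hsub : ({a, b, c} : Finset V) ⊆ H.neighborFinset v := by
      intro u hu
      simp only [Finset.mem_insert, Finset.mem_singleton] at hu
      rcases hu with rfl | rfl | rfl
      · exact (SimpleGraph.mem_neighborFinset _ _ _).2 hva
      · exact (SimpleGraph.mem_neighborFinset _ _ _).2 hvb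
      · exact (SimpleGraph.mem_neighborFinset _ _ _).2 hvc
    have hcard : ({a, b, c} : Finset V).card = 3 := by
      rw [Finset.card_insert_of_notMem (by simp [hab, hac]),
        Finset.card_insert_of_notMem (by simpa using hbc), Finset.card_singleton]
    calc 3 = ({a, b, c} : Finset V).card := hcard.symm
      _ ≤ _ := Finset.card_le_card hsub
  -- sum lower bound
  have hvS : (⟨v, hvK⟩ : S) ∈ (Finset.univ : Finset S) := Finset.mem_univ _
  have hsum : 2 * Fintype.card S + 1 ≤ ∑ w : S, G'.degree w := by
    have h1 : ∑ w : S, G'.degree w = ∑ w : S, H.degree w.val := by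
      apply Finset.sum_congr rfl
      intro w _
      exact hdeg w
    rw [h1]
    have h2 : ∑ w ∈ (Finset.univ : Finset S).erase ⟨v, hvK⟩, H.degree (w : S).val +
        H.degree (⟨v, hvK⟩ : S).val = ∑ w : S, H.degree w.val :=
      Finset.sum_erase_add _ _ hvS
    have h3 : ∀ w ∈ (Finset.univ : Finset S).erase ⟨v, hvK⟩, 2 ≤ H.degree (w : S).val :=
      fun w _ => hdeg2 w
    have h4 : ((Finset.univ : Finset S).erase ⟨v, hvK⟩).card * 2 ≤
        ∑ w ∈ (Finset.univ : Finset S).erase ⟨v, hvK⟩, H.degree (w : S).val := by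
      calc ((Finset.univ : Finset S).erase ⟨v, hvK⟩).card * 2
          = ∑ _w ∈ (Finset.univ : Finset S).erase ⟨v, hvK⟩, 2 := by
            rw [Finset.sum_const, smul_eq_mul]
        _ ≤ _ := Finset.sum_le_sum h3
    have h5 : ((Finset.univ : Finset S).erase ⟨v, hvK⟩).card = Fintype.card S - 1 := by
      rw [Finset.card_erase_of_mem hvS, Finset.card_univ]
    have h6 : 1 ≤ Fintype.card S := by
      rw [← Finset.card_univ]
      exact Finset.card_pos.2 ⟨⟨v, hvK⟩, hvS⟩
    have hdv : 3 ≤ H.degree (⟨v, hvK⟩ : S).val := hdeg3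
    omega
  -- combine
  have hSK : Fintype.card S = K.supp.ncard := by
    rw [← Nat.card_coe_set_eq, Nat.card_eq_fintype_card]
  have hfinal := hH K
  omega

lemma construct [Finite V] :
    ∀ (n : ℕ) (H : SimpleGraph V), H.edgeSet.ncard ≤ n → Hyp H →
      ∃ s C ℓ, Inv H s C ℓ := by
  intro n
  induction n with
  | zero =>
    intro H hn hH
    have hempty : H.edgeSet = ∅ := by
      rw [← Set.ncard_eq_zero (Set.toFinite _)]
      omega
    have hnoadj : ∀ v a : V, ¬ H.Adj v a := by
      intro v a hadj
      have : s(v,a) ∈ H.edgeSet := H.mem_edgeSet.2 hadj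
      rw [hempty] at this
      exact this
    exact base_construct H (fun v a h => absurd h (hnoadj v a))
      (fun v a b c h _ _ _ _ => absurd h (hnoadj v a))
  | succ n ih =>
    intro H hn hH
    by_cases hleaf : ∃ x y, H.Adj x y ∧ ∀ z, H.Adj x z → z = y
    · obtain ⟨x, y, hxy, hl⟩ := hleaf
      have hH' := hyp_delete hxy hl hH
      have hcard : (H.deleteEdges {s(x,y)}).edgeSet.ncard ≤ n := by
        rw [SimpleGraph.edgeSet_deleteEdges]
        have hx : s(x,y) ∈ H.edgeSet := H.mem_edgeSet.2 hxy
        have := Set.ncard_diff_singleton_lt_of_mem hx (Set.toFinite _)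
        omega
      obtain ⟨s', C, ℓ', inv⟩ := ih (H.deleteEdges {s(x,y)}) hcard hH'
      obtain ⟨s, ℓ, hinv⟩ := extend_leaf H x y hxy hl inv
      exact ⟨s, C, ℓ, hinv⟩
    · push_neg at hleaf
      exact base_construct H hleaf (deg_dichotomy hH hleaf)

end CF

/-- If every connected component of a finite graph `H` contains at most one cycle
(i.e. has at most as many edges as vertices), then `H` has a conflict-free edge coloring
with 3 colors such that moreover every vertex of positive degree is incident to exactly
one edge of some color. -/
theorem unicyclic_components_conflict_free_edge_coloring {V : Type*} [Finite V]
    (H : SimpleGraph V)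
    (hH : ∀ K : H.ConnectedComponent,
      {e ∈ H.edgeSet | ∀ v ∈ e, H.connectedComponentMk v = K}.ncard ≤ K.supp.ncard) :
    ∃ f : H.edgeSet → Fin 3,
      (∀ e : H.edgeSet, ∃ c : Fin 3, ∃! e' : H.edgeSet,
        (∃ v : V, v ∈ (e : Sym2 V) ∧ v ∈ (e' : Sym2 V)) ∧ f e' = c) ∧
      (∀ v : V, (∃ u : V, H.Adj v u) →
        ∃ c : Fin 3, ∃! e : H.edgeSet, v ∈ (e : Sym2 V) ∧ f e = c) := by
  obtain ⟨s, C, ℓ, inv⟩ := CF.construct (H.edgeSet.ncard) H le_rfl hH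
  exact ⟨CF.fcol s ℓ H, CF.abstract inv⟩
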